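/- For all points x, y in the upper half space ℍⁿ one has sinh(ρ(x,y)/2) ≥ ((xₙ + yₙ)/(2√(xₙyₙ)))·√( 1 − 4xₙyₙ/((xₙ+yₙ)² + |x′−y′|²) ) ≥ (xₙ + yₙ)·|x′−y′| / ( 2√(xₙyₙ)·√((xₙ+yₙ)² + |x′−y′|²) ), where x′ = x − xₙeₙ and y′ = y − yₙeₙ are the orthogonal projections of x and y onto the boundary hyperplane { zₙ = 0 }. -/

import Mathlib

/-- The inverse hyperbolic cosine: `arcosh t = log (t + √(t² − 1))`. -/
noncomputable def arcosh (t : ℝ) : ℝ := Real.log (t + Real.sqrt (t ^ 2 - 1))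

lemma cosh_arcosh {t : ℝ} (ht : 1 ≤ t) : Real.cosh (arcosh t) = t := by
  have h1 : (0:ℝ) ≤ t ^ 2 - 1 := by nlinarith
  have hs := Real.sq_sqrt h1
  have hs0 := Real.sqrt_nonneg (t ^ 2 - 1)
  have hy : (0:ℝ) < t + Real.sqrt (t ^ 2 - 1) := by nlinarith
  have hinv : (t + Real.sqrt (t ^ 2 - 1))⁻¹ = t - Real.sqrt (t ^ 2 - 1) := by
    rw [inv_eq_iff_eq_inv, eq_comm, inv_eq_one_div, div_eq_iff (by nlinarith)]
    nlinarith
  rw [arcosh, Real.cosh_eq, Real.exp_log hy, Real.exp_neg, Real.exp_log hy, hinv]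
  ring

lemma arcosh_nonneg {t : ℝ} (ht : 1 ≤ t) : 0 ≤ arcosh t := by
  have hs0 := Real.sqrt_nonneg (t ^ 2 - 1)
  exact Real.log_nonneg (by linarith)

lemma sinh_arcosh_half {t : ℝ} (ht : 1 ≤ t) :
    Real.sinh (arcosh t / 2) = Real.sqrt ((t - 1) / 2) := by
  have h0 : 0 ≤ Real.sinh (arcosh t / 2) :=
    Real.sinh_nonneg_iff.2 (by linarith [arcosh_nonneg ht])
  have hsq : Real.sinh (arcosh t / 2) ^ 2 = (t - 1) / 2 := by
    have h2 : Real.cosh (2 * (arcosh t / 2)) =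
        Real.cosh (arcosh t / 2) ^ 2 + Real.sinh (arcosh t / 2) ^ 2 :=
      Real.cosh_two_mul _
    have h3 : Real.cosh (arcosh t / 2) ^ 2 = Real.sinh (arcosh t / 2) ^ 2 + 1 :=
      Real.cosh_sq _
    have h4 : (2 : ℝ) * (arcosh t / 2) = arcosh t := by ring
    rw [h4, cosh_arcosh ht, h3] at h2
    linarith
  rw [← hsq, Real.sqrt_sq h0]

lemma pyth {n : ℕ} (x y : EuclideanSpace ℝ (Fin (n + 1))) :
    ‖x - y‖ ^ 2 =
      ‖(x - x (Fin.last n) • EuclideanSpace.single (Fin.last n) (1 : ℝ)) -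
        (y - y (Fin.last n) • EuclideanSpace.single (Fin.last n) (1 : ℝ))‖ ^ 2 +
      (x (Fin.last n) - y (Fin.last n)) ^ 2 := by
  set e : EuclideanSpace ℝ (Fin (n + 1)) := EuclideanSpace.single (Fin.last n) (1 : ℝ)
  set a := x (Fin.last n)
  set b := y (Fin.last n)
  set v := (x - a • e) - (y - b • e) with hv
  have hxy : x - y = v + (a - b) • e := by rw [hv]; module
  have hvlast : v (Fin.last n) = 0 := by
    simp [hv, e, EuclideanSpace.single_apply]; simp [a, b]
  have hinner : inner ℝ v ((a - b) • e) = (0 : ℝ) := by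
    rw [real_inner_smul_right]
    have : inner ℝ v e = (0 : ℝ) := by
      rw [show (inner ℝ v e : ℝ) = v (Fin.last n) by
        simp [e, EuclideanSpace.inner_single_right]]
      exact hvlast
    rw [this]; ring
  have hne : ‖(a - b) • e‖ = |a - b| := by
    rw [norm_smul, EuclideanSpace.norm_single]
    simp [Real.norm_eq_abs]
  rw [hxy, norm_add_sq_real, hinner, hne, sq_abs]
  ring

lemma alg (a b d : ℝ) (ha : 0 < a) (hb : 0 < b) (hd : 0 ≤ d) :
    Real.sqrt (d ^ 2 + (a - b) ^ 2) / (2 * Real.sqrt (a * b)) ≥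
      (a + b) / (2 * Real.sqrt (a * b)) *
        Real.sqrt (1 - 4 * (a * b) / ((a + b) ^ 2 + d ^ 2)) ∧
    (a + b) / (2 * Real.sqrt (a * b)) *
        Real.sqrt (1 - 4 * (a * b) / ((a + b) ^ 2 + d ^ 2)) ≥
      (a + b) * d / (2 * Real.sqrt (a * b) * Real.sqrt ((a + b) ^ 2 + d ^ 2)) := by
  have hS : (0:ℝ) < (a + b) ^ 2 + d ^ 2 := by positivity
  have hrat : 1 - 4 * (a * b) / ((a + b) ^ 2 + d ^ 2)
      = ((a - b) ^ 2 + d ^ 2) / ((a + b) ^ 2 + d ^ 2) := by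
    field_simp; ring
  have hr : 0 < Real.sqrt (a * b) := Real.sqrt_pos.2 (by positivity)
  have hs : 0 < Real.sqrt ((a + b) ^ 2 + d ^ 2) := Real.sqrt_pos.2 hS
  have hsab : a + b ≤ Real.sqrt ((a + b) ^ 2 + d ^ 2) :=
    Real.le_sqrt_of_sq_le (by nlinarith)
  have hk : d ≤ Real.sqrt ((a - b) ^ 2 + d ^ 2) :=
    Real.le_sqrt_of_sq_le (by nlinarith)
  have hk0 : 0 ≤ Real.sqrt ((a - b) ^ 2 + d ^ 2) := Real.sqrt_nonneg _
  rw [hrat, Real.sqrt_div ((by positivity) : (0:ℝ) ≤ (a - b) ^ 2 + d ^ 2)]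
  set k := Real.sqrt ((a - b) ^ 2 + d ^ 2)
  set s := Real.sqrt ((a + b) ^ 2 + d ^ 2)
  have hkk : Real.sqrt (d ^ 2 + (a - b) ^ 2) = k := by rw [add_comm]
  constructor
  · rw [ge_iff_le, div_mul_div_comm, div_le_div_iff₀ (by positivity) (by positivity), hkk]
    nlinarith [mul_le_mul_of_nonneg_left hsab (by positivity : (0:ℝ) ≤ k * (2 * Real.sqrt (a * b)))]
  · rw [ge_iff_le, div_mul_div_comm, div_le_div_iff₀ (by positivity) (by positivity)]
    nlinarith [mul_le_mul_of_nonneg_left hk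
      (by positivity : (0:ℝ) ≤ (a + b) * (2 * Real.sqrt (a * b) * s)), hs.le]

/-- Hyperbolic distance in the upper half space
`ℍⁿ = { x ∈ ℝⁿ : xₙ > 0 }` (here `ℝⁿ = EuclideanSpace ℝ (Fin (n+1))` with last
coordinate `x (Fin.last n)`): `cosh ρ(x,y) = 1 + |x−y|²/(2 xₙ yₙ)`. -/
noncomputable def hypDistHalf {n : ℕ} (x y : EuclideanSpace ℝ (Fin (n + 1))) : ℝ :=
  arcosh (1 + ‖x - y‖ ^ 2 / (2 * x (Fin.last n) * y (Fin.last n)))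

theorem sinh_half_hypDistHalf_lower_bound {n : ℕ} (x y : EuclideanSpace ℝ (Fin (n + 1)))
    (hx : 0 < x (Fin.last n)) (hy : 0 < y (Fin.last n)) :
    Real.sinh (hypDistHalf x y / 2) ≥
      (x (Fin.last n) + y (Fin.last n)) / (2 * Real.sqrt (x (Fin.last n) * y (Fin.last n))) *
        Real.sqrt (1 - 4 * (x (Fin.last n) * y (Fin.last n)) /
          ((x (Fin.last n) + y (Fin.last n)) ^ 2 +
            ‖(x - x (Fin.last n) • EuclideanSpace.single (Fin.last n) (1 : ℝ)) -
              (y - y (Fin.last n) • EuclideanSpace.single (Fin.last n) (1 : ℝ))‖ ^ 2)) ∧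
    (x (Fin.last n) + y (Fin.last n)) / (2 * Real.sqrt (x (Fin.last n) * y (Fin.last n))) *
        Real.sqrt (1 - 4 * (x (Fin.last n) * y (Fin.last n)) /
          ((x (Fin.last n) + y (Fin.last n)) ^ 2 +
            ‖(x - x (Fin.last n) • EuclideanSpace.single (Fin.last n) (1 : ℝ)) -
              (y - y (Fin.last n) • EuclideanSpace.single (Fin.last n) (1 : ℝ))‖ ^ 2)) ≥
      (x (Fin.last n) + y (Fin.last n)) *
          ‖(x - x (Fin.last n) • EuclideanSpace.single (Fin.last n) (1 : ℝ)) -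
            (y - y (Fin.last n) • EuclideanSpace.single (Fin.last n) (1 : ℝ))‖ /
        (2 * Real.sqrt (x (Fin.last n) * y (Fin.last n)) *
          Real.sqrt ((x (Fin.last n) + y (Fin.last n)) ^ 2 +
            ‖(x - x (Fin.last n) • EuclideanSpace.single (Fin.last n) (1 : ℝ)) -
              (y - y (Fin.last n) • EuclideanSpace.single (Fin.last n) (1 : ℝ))‖ ^ 2)) := by
  have hp := pyth x y
  set a := x (Fin.last n)
  set b := y (Fin.last n)
  set d := ‖(x - a • EuclideanSpace.single (Fin.last n) (1 : ℝ)) -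
      (y - b • EuclideanSpace.single (Fin.last n) (1 : ℝ))‖ with hdd
  have hd : 0 ≤ d := norm_nonneg _
  have ht : 1 ≤ 1 + ‖x - y‖ ^ 2 / (2 * a * b) := by
    have : 0 ≤ ‖x - y‖ ^ 2 / (2 * a * b) := by positivity
    linarith
  have hsinh : Real.sinh (hypDistHalf x y / 2)
      = Real.sqrt (d ^ 2 + (a - b) ^ 2) / (2 * Real.sqrt (a * b)) := by
    rw [hypDistHalf, sinh_arcosh_half ht,
      show (1 + ‖x - y‖ ^ 2 / (2 * a * b) - 1) / 2 = (d ^ 2 + (a - b) ^ 2) / (4 * (a * b)) by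
        rw [hp]; field_simp [hx.ne', hy.ne']; ring,
      Real.sqrt_div (by positivity)]
    congr 1
    rw [show (4 : ℝ) * (a * b) = 2 ^ 2 * (a * b) by ring,
      Real.sqrt_mul (by positivity), Real.sqrt_sq (by norm_num)]
  obtain ⟨h1, h2⟩ := alg a b d hx hy hd
  rw [hsinh]
  exact ⟨h1, h2⟩
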